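/- Let α > 1 be a real number and let s_1, …, s_n be positive integers with total sum Σ = s_1 + ⋯ + s_n. Then there exists a subset T ⊆ {1,…,n} with Σ_{i∈T} s_i = Σ_{i∉T} s_i if and only if there exists a function f : {1,…,n} → {0,1} such that (2·Σ_{i: f(i)=0} s_i)^α + (2·Σ_{i: f(i)=1} s_i)^α ≤ 2·Σ^α. (This is the correctness of the reduction from Partition to the Grid problem with unit-width jobs: scheduling the jobs with release time 0, deadline 2, width 1 and height 2s_i into two timeslots achieves cost at most 2(Σ s_i)^α exactly when the set can be partitioned into two equal-sum parts.) -/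

import Mathlib

open scoped BigOperators NNReal

theorem stmt19 (α : ℝ) (hα : 1 < α) (n : ℕ) (s : Fin n → ℕ) (hs : ∀ i, 0 < s i) :
    (∃ T : Finset (Fin n), ∑ i ∈ T, s i = ∑ i ∈ Tᶜ, s i) ↔
    (∃ f : Fin n → Bool,
      (2 * ∑ i ∈ Finset.univ.filter (fun i => f i = false), (s i : ℝ)) ^ α
        + (2 * ∑ i ∈ Finset.univ.filter (fun i => f i = true), (s i : ℝ)) ^ α
        ≤ 2 * ((∑ i, s i : ℕ) : ℝ) ^ α) := by
  constructor
  · rintro ⟨T, hT⟩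
    refine ⟨fun i => decide (i ∈ T), ?_⟩
    have h0 : Finset.univ.filter (fun i => decide (i ∈ T) = false) = Tᶜ := by
      ext i; simp [Finset.mem_compl]
    have h1 : Finset.univ.filter (fun i => decide (i ∈ T) = true) = T := by
      ext i; simp
    rw [h0, h1]
    have hsum : ∑ i ∈ T, s i + ∑ i ∈ Tᶜ, s i = ∑ i, s i :=
      Finset.sum_add_sum_compl T s
    have h2 : (2 * ∑ i ∈ T, (s i : ℝ)) = ((∑ i, s i : ℕ) : ℝ) := by
      push_cast [← hsum, ← hT]; ring
    have h3 : (2 * ∑ i ∈ Tᶜ, (s i : ℝ)) = ((∑ i, s i : ℕ) : ℝ) := by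
      push_cast [← hsum, hT]; ring
    rw [h2, h3]; rw [two_mul]
  · rintro ⟨f, hf⟩
    set a : ℕ := ∑ i ∈ Finset.univ.filter (fun i => f i = false), s i with ha
    set b : ℕ := ∑ i ∈ Finset.univ.filter (fun i => f i = true), s i with hb
    have hcastA : ∑ i ∈ Finset.univ.filter (fun i => f i = false), (s i : ℝ) = (a : ℝ) := by
      push_cast [ha]; ring
    have hcastB : ∑ i ∈ Finset.univ.filter (fun i => f i = true), (s i : ℝ) = (b : ℝ) := by
      push_cast [hb]; ring
    have hab : a + b = ∑ i, s i := by
      rw [ha, hb, ← Finset.sum_filter_add_sum_filter_not Finset.univ (fun i => f i = false)]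
      congr 1
      apply Finset.sum_congr _ (fun _ _ => rfl)
      ext i; simp
    rw [hcastA, hcastB] at hf
    have habR : ((∑ i, s i : ℕ) : ℝ) = (a : ℝ) + (b : ℝ) := by
      rw [← hab]; push_cast; ring
    have haeqb : a = b := by
      by_contra hne
      have h2a2b : (2 * (a : ℝ)) ≠ (2 * (b : ℝ)) := by
        simp only [ne_eq, mul_eq_mul_left_iff]
        push_neg
        exact ⟨fun h => hne (Nat.cast_injective h), by norm_num⟩
      have := (strictConvexOn_rpow hα).2 (Set.mem_Ici.mpr (by positivity : (0:ℝ) ≤ 2 * a))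
        (Set.mem_Ici.mpr (by positivity : (0:ℝ) ≤ 2 * b)) h2a2b
        (by norm_num : (0:ℝ) < 1/2) (by norm_num : (0:ℝ) < 1/2) (by norm_num)
      simp only [smul_eq_mul] at this
      have hmid : (1/2 : ℝ) * (2 * a) + (1/2 : ℝ) * (2 * b) = (a : ℝ) + b := by ring
      rw [hmid] at this
      rw [habR] at hf
      nlinarith [this, hf]
    refine ⟨Finset.univ.filter (fun i => f i = false), ?_⟩
    have hcompl : (Finset.univ.filter (fun i => f i = false))ᶜ
        = Finset.univ.filter (fun i => f i = true) := by
      ext i; simp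
    rw [hcompl, ← ha, ← hb]; exact haeqb
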